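/- For a non-principal filter F on ℕ the following are equivalent: (1) F is meager; (2) ONE has a winning strategy in G1(F); (3) the game G1(F) is determined. -/

import Mathlib

open Filter Set

/-- A strategy: maps finite sequences of the opponent's moves to a natural number. -/
abbrev Strat := List ℕ → ℕ

/-- TWO's move in inning `k` (0-indexed) when following strategy `σ` against ONE's
moves `m`: TWO has seen `m 0, …, m k`. -/
def twoFollow (σ : Strat) (m : ℕ → ℕ) (k : ℕ) : ℕ :=
  σ (List.ofFn fun i : Fin (k + 1) => m i)

/-- ONE's move in inning `k` when following strategy `σ` against TWO's moves `n`: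
ONE's move depends on `n 0, …, n (k-1)` (the first move is `σ []`). -/
def oneFollow (σ : Strat) (n : ℕ → ℕ) (k : ℕ) : ℕ :=
  σ (List.ofFn fun i : Fin k => n i)

/-- TWO wins the play `(m 0, n 0, m 1, n 1, …)` of the game `G1(F)`. -/
def TwoWins1 (F : Set (Set ℕ)) (m n : ℕ → ℕ) : Prop :=
  StrictMono n ∧ (∀ N : ℕ, ∃ k, N ≤ k ∧ m k < n k) ∧ Set.range n ∈ F

/-- TWO wins the play `(m 0, n 0, m 1, n 1, …)` of the game `G2(F)`. -/
def TwoWins2 (F : Set (Set ℕ)) (m n : ℕ → ℕ) : Prop :=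
  (∀ᶠ k in Filter.atTop, m k < n k) ∧ Set.range n ∈ F

/-- `σ` is a winning strategy for TWO in `G1(F)`. -/
def TwoWinning1 (F : Set (Set ℕ)) (σ : Strat) : Prop :=
  ∀ m : ℕ → ℕ, TwoWins1 F m (twoFollow σ m)

/-- `σ` is a winning strategy for ONE in `G1(F)`. -/
def OneWinning1 (F : Set (Set ℕ)) (σ : Strat) : Prop :=
  ∀ n : ℕ → ℕ, ¬ TwoWins1 F (oneFollow σ n) n

/-- `σ` is a winning strategy for TWO in `G2(F)`. -/
def TwoWinning2 (F : Set (Set ℕ)) (σ : Strat) : Prop :=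
  ∀ m : ℕ → ℕ, TwoWins2 F m (twoFollow σ m)

/-- `σ` is a winning strategy for ONE in `G2(F)`. -/
def OneWinning2 (F : Set (Set ℕ)) (σ : Strat) : Prop :=
  ∀ n : ℕ → ℕ, ¬ TwoWins2 F (oneFollow σ n) n

/-- `F` is a non-principal filter on `ℕ`: upward closed, closed under finite
intersections, and every member is infinite. -/
def IsNPFilter (F : Set (Set ℕ)) : Prop :=
  (∀ X ∈ F, ∀ Y : Set ℕ, X ⊆ Y → Y ∈ F) ∧
  (∀ X ∈ F, ∀ Y ∈ F, X ∩ Y ∈ F) ∧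
  (∀ X ∈ F, X.Infinite)

/-- `F` is a rare filter: every partition of `ℕ` into disjoint (nonempty) finite sets
admits a selector in `F`. -/
def IsRare (F : Set (Set ℕ)) : Prop :=
  ∀ I : ℕ → Set ℕ, (∀ n, (I n).Finite) → (∀ n, (I n).Nonempty) →
    (Pairwise fun i j => Disjoint (I i) (I j)) → (⋃ n, I n) = Set.univ →
    ∃ X ∈ F, ∀ n, (X ∩ I n).Subsingleton

/-- The subset of Cantor space `2^ℕ` corresponding to the filter `F`. -/
def cantorCoded (F : Set (Set ℕ)) : Set (ℕ → Bool) :=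
  {χ | {n | χ n = true} ∈ F}

/-- The increasing enumeration of `X ⊆ ℕ`. -/
noncomputable def enum (X : Set ℕ) : ℕ → ℕ := Nat.nth (· ∈ X)

/-- `g` eventually dominates `f`. -/
def EvDom (g f : ℕ → ℕ) : Prop := ∀ᶠ k in Filter.atTop, f k < g k


noncomputable section
namespace S3
open Filter Set Topology

abbrev Cant := ℕ → Bool
abbrev Bai := ℕ → ℕ

lemma S3cc (F : Set (Set ℕ)) : cantorCoded F = {χ : Cant | {n | χ n = true} ∈ F} := rfl

/-- cylinder determined by a finite list of bits -/
def cyl (l : List Bool) : Set Cant := {χ | ∀ i : Fin l.length, χ i = l.get i}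

lemma isOpen_cyl (l : List Bool) : IsOpen (cyl l) := by
  have : cyl l = ⋂ i : Fin l.length, (fun χ : Cant => χ i) ⁻¹' {l.get i} := by
    ext χ; simp [cyl, Set.mem_iInter]
  rw [this]
  exact isOpen_iInter_of_finite fun i =>
    (continuous_apply (i : ℕ)).isOpen_preimage _ (isOpen_discrete _)

lemma isClosed_cyl (l : List Bool) : IsClosed (cyl l) := by
  have : cyl l = ⋂ i : Fin l.length, (fun χ : Cant => χ i) ⁻¹' {l.get i} := by
    ext χ; simp [cyl, Set.mem_iInter]
  rw [this]
  exact isClosed_iInter fun i =>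
    (IsClosed.preimage (continuous_apply (i : ℕ)) (isClosed_discrete _))

/-- canonical extension of a list to an element of Cantor space -/
def ext0 (l : List Bool) : Cant := fun i => if h : i < l.length then l.get ⟨i, h⟩ else false

lemma ext0_mem_cyl (l : List Bool) : ext0 l ∈ cyl l := by
  intro i; simp [ext0, i.isLt]

lemma cyl_nonempty (l : List Bool) : (cyl l).Nonempty := ⟨ext0 l, ext0_mem_cyl l⟩

/-- list of the first k values of χ -/
def toList (χ : Cant) (k : ℕ) : List Bool := List.ofFn (fun i : Fin k => χ i)

@[simp] lemma toList_length (χ : Cant) (k : ℕ) : (toList χ k).length = k := by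
  simp [toList]

lemma toList_get (χ : Cant) (k i : ℕ) (h : i < (toList χ k).length) :
    (toList χ k).get ⟨i, h⟩ = χ i := by
  simp [toList]

lemma mem_cyl_toList (χ : Cant) (k : ℕ) : χ ∈ cyl (toList χ k) := by
  intro i
  rw [show ((toList χ k).get i) = χ i by
    have := toList_get χ k i.1 i.2
    simpa using this]

lemma mem_cyl_iff (l : List Bool) (χ : Cant) :
    χ ∈ cyl l ↔ ∀ i, ∀ h : i < l.length, χ i = l.get ⟨i, h⟩ := by
  constructor
  · intro h i hi; exact h ⟨i, hi⟩
  · intro h i; exact h i i.isLt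

lemma mem_cyl_of_agree (l : List Bool) (χ ψ : Cant) (hψ : ψ ∈ cyl l)
    (hag : ∀ i < l.length, χ i = ψ i) : χ ∈ cyl l := by
  intro i
  rw [hag i i.isLt]; exact hψ i

/-- cylinders form a basis -/
lemma exists_cyl_subset {U : Set Cant} (hU : IsOpen U) {χ : Cant} (hχ : χ ∈ U) :
    ∃ l, χ ∈ cyl l ∧ cyl l ⊆ U := by
  rcases (isOpen_pi_iff.1 hU) χ hχ with ⟨I, u, hI, hsub⟩
  classical
  set N := (I.sup id) + 1 with hN
  refine ⟨toList χ N, mem_cyl_toList χ N, ?_⟩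
  intro ψ hψ
  apply hsub
  rw [Set.mem_pi]
  intro a ha
  have haN : a < N := by
    have : a ≤ I.sup id := Finset.le_sup (f := id) ha
    omega
  have hval : ψ a = χ a := by
    have h2 := hψ ⟨a, by simpa using haN⟩
    rw [toList_get χ N a (by simpa using haN)] at h2
    exact h2
  rw [hval]
  exact (hI a ha).2

lemma isMeagre_open_empty {U : Set Cant} (hU : IsOpen U) (hm : IsMeagre U) : U = ∅ := by
  by_contra h
  rcases Set.nonempty_iff_ne_empty.2 h with ⟨x, hx⟩
  have hd : Dense Uᶜ := dense_of_mem_residual hm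
  rcases hd.inter_open_nonempty U hU ⟨x, hx⟩ with ⟨y, hy1, hy2⟩
  exact hy2 hy1

lemma not_isMeagre_cyl (l : List Bool) : ¬ IsMeagre (cyl l) := fun h =>
  Set.nonempty_iff_ne_empty.1 (cyl_nonempty l) (isMeagre_open_empty (isOpen_cyl l) h)

lemma isMeagre_biUnion {ι : Type*} {S : Set ι} (hS : S.Countable) {f : ι → Set Cant}
    (h : ∀ i ∈ S, IsMeagre (f i)) : IsMeagre (⋃ i ∈ S, f i) := by
  unfold IsMeagre at *
  rw [Set.compl_iUnion₂]
  exact (countable_bInter_mem hS).2 h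

/-- the largest open set where Z is locally meagre -/
def locM (Z : Set Cant) : Set Cant := ⋃ l ∈ {l : List Bool | IsMeagre (Z ∩ cyl l)}, cyl l

lemma isOpen_locM (Z : Set Cant) : IsOpen (locM Z) :=
  isOpen_biUnion fun l _ => isOpen_cyl l

lemma isMeagre_inter_locM (Z : Set Cant) : IsMeagre (Z ∩ locM Z) := by
  have hsub : Z ∩ locM Z ⊆ ⋃ l ∈ {l : List Bool | IsMeagre (Z ∩ cyl l)}, (Z ∩ cyl l) := by
    intro χ ⟨hχZ, hχD⟩
    simp only [locM, Set.mem_iUnion] at hχD ⊢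
    rcases hχD with ⟨l, hl, hc⟩
    exact ⟨l, hl, hχZ, hc⟩
  exact IsMeagre.mono hsub (isMeagre_biUnion (Set.to_countable _) (fun l hl => hl))

/-- Baire envelope of an arbitrary set -/
def env (Z : Set Cant) : Set Cant := (Z ∩ locM Z) ∪ (locM Z)ᶜ

lemma subset_env (Z : Set Cant) : Z ⊆ env Z := by
  intro χ hχ
  by_cases h : χ ∈ locM Z
  · exact Or.inl ⟨hχ, h⟩
  · exact Or.inr h

lemma baireMeasurableSet_env (Z : Set Cant) : BaireMeasurableSet (env Z) :=
  BaireMeasurableSet.union (isMeagre_inter_locM Z).baireMeasurableSet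
    (isOpen_locM Z).baireMeasurableSet.compl

/-- a nonmeagre Baire-measurable set is comeagre in some cylinder -/
lemma comeagre_cyl_of_nonmeagre {S : Set Cant} (hS : BaireMeasurableSet S)
    (h : ¬ IsMeagre S) : ∃ l, IsMeagre (cyl l \ S) := by
  rcases hS.residualEq_isOpen with ⟨U, hU, hSU⟩
  have hd : IsMeagre {χ | ¬ (χ ∈ S ↔ χ ∈ U)} := by
    unfold IsMeagre
    have hcompl : {χ | ¬ (χ ∈ S ↔ χ ∈ U)}ᶜ = {χ | S χ = U χ} := by
      ext χ
      simp only [Set.mem_compl_iff, Set.mem_setOf_eq, not_not, eq_iff_iff]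
      rfl
    rw [hcompl]
    exact hSU
  have hUne : U.Nonempty := by
    rcases Set.eq_empty_or_nonempty U with h0 | h0
    · exfalso; apply h
      refine IsMeagre.mono ?_ hd
      intro χ hχ
      simp only [Set.mem_setOf_eq]
      subst h0
      simp [hχ]
    · exact h0
  rcases hUne with ⟨χ, hχ⟩
  rcases exists_cyl_subset hU hχ with ⟨l, _, hlU⟩
  refine ⟨l, IsMeagre.mono ?_ hd⟩
  intro ψ ⟨hψl, hψS⟩
  simp only [Set.mem_setOf_eq]
  intro hiff
  exact hψS (hiff.2 (hlU hψl))

lemma env_diff_meagre {Z B : Set Cant} (hB : BaireMeasurableSet B) (hZB : Z ⊆ B) :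
    IsMeagre (env Z \ B) := by
  have hsplit : env Z \ B ⊆ (Z ∩ locM Z) ∪ ((locM Z)ᶜ \ B) := by
    intro χ ⟨hχE, hχB⟩
    rcases hχE with h | h
    · exact Or.inl h
    · exact Or.inr ⟨h, hχB⟩
  refine IsMeagre.mono hsplit ?_
  have h1 : IsMeagre (Z ∩ locM Z) := isMeagre_inter_locM Z
  have h2 : IsMeagre ((locM Z)ᶜ \ B) := by
    by_contra hne
    have hbm : BaireMeasurableSet ((locM Z)ᶜ \ B) :=
      BaireMeasurableSet.diff (isOpen_locM Z).baireMeasurableSet.compl hB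
    rcases comeagre_cyl_of_nonmeagre hbm hne with ⟨l, hl⟩
    -- cyl l ∩ locM Z is open and meagre, hence empty
    have hld : cyl l ∩ locM Z = ∅ := by
      apply isMeagre_open_empty ((isOpen_cyl l).inter (isOpen_locM Z))
      refine IsMeagre.mono ?_ hl
      intro χ ⟨hχl, hχD⟩
      exact ⟨hχl, fun hmem => hmem.1 hχD⟩
    -- cyl l ∩ B is meagre
    have hlB : IsMeagre (cyl l ∩ B) := by
      refine IsMeagre.mono ?_ hl
      intro χ ⟨hχl, hχB⟩
      refine ⟨hχl, fun hmem => hmem.2 hχB⟩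
    -- so Z ∩ cyl l is meagre, hence cyl l ⊆ locM Z
    have hZl : IsMeagre (Z ∩ cyl l) := by
      refine IsMeagre.mono ?_ hlB
      intro χ ⟨hχZ, hχl⟩
      exact ⟨hχl, hZB hχZ⟩
    have : cyl l ⊆ locM Z := by
      intro χ hχ
      exact Set.mem_biUnion hZl hχ
    have : cyl l = ∅ := by
      rw [← hld]
      ext χ; constructor
      · intro h; exact ⟨h, this h⟩
      · intro h; exact h.1
    exact Set.nonempty_iff_ne_empty.1 (cyl_nonempty l) this
  -- union of two meagre sets
  unfold IsMeagre at *
  rw [Set.compl_union]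
  exact Filter.inter_mem h1 h2


lemma mem_cyl {l : List Bool} {χ : Cant} : χ ∈ cyl l ↔ ∀ i : Fin l.length, χ i = l.get i :=
  Iff.rfl

lemma ext0_false (l : List Bool) (j : ℕ) (h : l.length ≤ j) : ext0 l j = false := by
  unfold ext0
  rw [dif_neg (by omega)]




def ncyl (s : List ℕ) : Set Bai := {z | ∀ i : Fin s.length, z i = s.get i}

lemma ncyl_nil : ncyl [] = Set.univ := by
  ext z
  simp only [ncyl, Set.mem_setOf_eq, Set.mem_univ, iff_true]
  intro i
  exact absurd i.2 (by simp)

lemma ncyl_eq_iUnion (s : List ℕ) : ncyl s = ⋃ k, ncyl (s ++ [k]) := by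
  ext z
  simp only [Set.mem_iUnion]
  constructor
  · intro h
    refine ⟨z s.length, fun i => ?_⟩
    rcases Nat.lt_or_ge i (s.length) with hi | hi
    · have h2 : (s ++ [z s.length]).get i = s.get ⟨i, hi⟩ := by
        simp [List.getElem_append_left hi]
      rw [h2]; exact h ⟨i, hi⟩
    · have hl : (i : ℕ) = s.length := by
        have := i.2; simp at this; omega
      have h2 : (s ++ [z s.length]).get i = z s.length := by
        rcases i with ⟨iv, hiv⟩
        subst hl
        simp
      rw [h2, hl]
  · rintro ⟨k, hk⟩ i
    have h2 : (s ++ [k]).get ⟨i, by simp⟩ = s.get i := by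
      simp [List.getElem_append_left i.2]
    have := hk ⟨i, by simp⟩
    simp only at this
    rw [← h2]; exact this

variable (Φ : Bai → Cant)

def Fs (s : List ℕ) : Set Cant := closure (Φ '' ncyl s)

def As (s : List ℕ) : Set Cant := Φ '' ncyl s

def Es (s : List ℕ) : Set Cant := env (As Φ s) ∩ Fs Φ s

lemma As_subset_Es (s : List ℕ) : As Φ s ⊆ Es Φ s :=
  fun y hy => ⟨subset_env _ hy, subset_closure hy⟩

lemma baireMeasurableSet_Es (s : List ℕ) : BaireMeasurableSet (Es Φ s) :=
  (baireMeasurableSet_env _).inter (isClosed_closure.isOpen_compl.baireMeasurableSet.of_compl)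

def Ms (s : List ℕ) : Set Cant := Es Φ s \ ⋃ k, Es Φ (s ++ [k])

lemma isMeagre_Ms (s : List ℕ) : IsMeagre (Ms Φ s) := by
  have hB : BaireMeasurableSet (⋃ k, Es Φ (s ++ [k])) :=
    BaireMeasurableSet.iUnion fun k => baireMeasurableSet_Es Φ _
  have hsub : As Φ s ⊆ ⋃ k, Es Φ (s ++ [k]) := by
    intro y hy
    rcases hy with ⟨z, hz, rfl⟩
    rw [ncyl_eq_iUnion] at hz
    rcases Set.mem_iUnion.1 hz with ⟨k, hk⟩
    exact Set.mem_iUnion.2 ⟨k, As_subset_Es Φ _ ⟨z, hk, rfl⟩⟩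
  have := env_diff_meagre hB hsub
  refine IsMeagre.mono ?_ this
  intro y ⟨hy1, hy2⟩
  exact ⟨hy1.1, hy2⟩

/-- prefix of x as a list -/
def pfx (x : Bai) (n : ℕ) : List ℕ := List.ofFn (fun i : Fin n => x i)

@[simp] lemma pfx_length (x : Bai) (n : ℕ) : (pfx x n).length = n := by simp [pfx]

lemma mem_ncyl_pfx (x : Bai) (n : ℕ) : x ∈ ncyl (pfx x n) := by
  intro i
  show x i = (pfx x n)[(i : ℕ)]
  simp [pfx]

lemma scheme_limit (hΦ : Continuous Φ) (y : Cant) (x : Bai)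
    (h : ∀ n, y ∈ Fs Φ (pfx x n)) : y ∈ Set.range Φ := by
  -- choose witnesses
  have hw : ∀ n, ∃ z : Bai, z ∈ ncyl (pfx x n) ∧ ∀ i < n, Φ z i = y i := by
    intro n
    have hy := h n
    rw [Fs, mem_closure_iff_nhds] at hy
    have hnb : {ψ : Cant | ∀ i < n, ψ i = y i} ∈ nhds y := by
      have : {ψ : Cant | ∀ i < n, ψ i = y i} = ⋂ i ∈ Finset.range n, (fun ψ : Cant => ψ i) ⁻¹' {y i} := by
        ext ψ; simp
      rw [this]
      refine Filter.biInter_finset_mem _ |>.2 fun i _ => ?_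
      exact (continuous_apply i).continuousAt.preimage_mem_nhds (by simp)
    rcases hy _ hnb with ⟨ψ, hψ1, hψ2⟩
    rcases hψ2 with ⟨z, hz, rfl⟩
    exact ⟨z, hz, hψ1⟩
  choose z hz1 hz2 using hw
  -- z n → x
  have hzx : Filter.Tendsto z Filter.atTop (nhds x) := by
    rw [tendsto_pi_nhds]
    intro i
    apply Filter.Tendsto.congr' (f₁ := fun _ => x i)
    · filter_upwards [Filter.eventually_ge_atTop (i+1)] with n hn
      have := hz1 n ⟨i, by simp; omega⟩
      simp only [pfx, List.get_ofFn] at this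
      simp at this ⊢
      omega
    · exact tendsto_const_nhds
  have hzy : Filter.Tendsto (fun n => Φ (z n)) Filter.atTop (nhds y) := by
    rw [tendsto_pi_nhds]
    intro i
    apply Filter.Tendsto.congr' (f₁ := fun _ => y i)
    · filter_upwards [Filter.eventually_ge_atTop (i+1)] with n hn
      exact (hz2 n i (by omega)).symm
    · exact tendsto_const_nhds
  have : Φ x = y := tendsto_nhds_unique ((hΦ.tendsto x).comp hzx) hzy
  exact ⟨x, this⟩

lemma isMeagre_iUnion_listindex {f : List ℕ → Set Cant} (h : ∀ s, IsMeagre (f s)) :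
    IsMeagre (⋃ s, f s) := by
  unfold IsMeagre at *
  rw [Set.compl_iUnion]
  exact countable_iInter_mem.2 h

/-- main theorem: a continuous image of Baire space is Baire measurable -/
theorem baireMeasurableSet_range (hΦ : Continuous Φ) : BaireMeasurableSet (Set.range Φ) := by
  classical
  set M : Set Cant := ⋃ s : List ℕ, Ms Φ s with hM
  have hMm : IsMeagre M := isMeagre_iUnion_listindex fun s => isMeagre_Ms Φ s
  have hrangeE : Set.range Φ ⊆ Es Φ [] := by
    intro y hy
    rcases hy with ⟨x, rfl⟩
    exact As_subset_Es Φ [] ⟨x, by rw [ncyl_nil]; trivial, rfl⟩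
  have hkey : Es Φ [] \ M ⊆ Set.range Φ := by
    intro y hy
    rcases hy with ⟨hyE, hyM⟩
    -- build the branch recursively
    have hstep : ∀ s : List ℕ, y ∈ Es Φ s → ∃ k, y ∈ Es Φ (s ++ [k]) := by
      intro s hs
      by_contra hcon
      push_neg at hcon
      apply hyM
      refine Set.mem_iUnion.2 ⟨s, hs, ?_⟩
      intro hmem
      rcases Set.mem_iUnion.1 hmem with ⟨k, hk⟩
      exact hcon k hk
    let rec' : ∀ n : ℕ, {s : List ℕ // y ∈ Es Φ s ∧ s.length = n} := fun n =>
      Nat.rec ⟨[], hyE, rfl⟩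
        (fun _ p => ⟨p.1 ++ [Classical.choose (hstep p.1 p.2.1)],
          Classical.choose_spec (hstep p.1 p.2.1), by simp [p.2.2]⟩) n
    set x : Bai := fun i => (rec' (i+1)).1.getLastD 0 with hx
    have hxp : ∀ n, pfx x n = (rec' n).1 := by
      intro n
      induction n with
      | zero =>
        simp only [pfx]
        rfl
      | succ n ih =>
        have hsucc : (rec' (n+1)).1 = (rec' n).1 ++ [Classical.choose (hstep (rec' n).1 (rec' n).2.1)] := rfl
        have hpfx : pfx x (n+1) = pfx x n ++ [x n] := by
          rw [pfx, List.ofFn_succ']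
          simp [pfx, List.concat_eq_append]
        have hxn : x n = Classical.choose (hstep (rec' n).1 (rec' n).2.1) := by
          show ((rec' (n+1)).1).getLastD 0 = _
          rw [hsucc]
          exact List.getLastD_concat
        rw [hpfx, ih, hsucc, hxn]
    apply scheme_limit Φ hΦ y x
    intro n
    rw [hxp n]
    exact (rec' n).2.1.2
  have hdecomp : Set.range Φ = (Es Φ [] \ M) ∪ (Set.range Φ ∩ M) := by
    ext y
    constructor
    · intro hy
      by_cases hM' : y ∈ M
      · exact Or.inr ⟨hy, hM'⟩
      · exact Or.inl ⟨hrangeE hy, hM'⟩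
    · rintro (⟨h1, _⟩ | ⟨h1, _⟩)
      · exact hkey ⟨h1, ‹_›⟩
      · exact h1
  rw [hdecomp]
  exact ((baireMeasurableSet_Es Φ []).diff hMm.baireMeasurableSet).union
    (IsMeagre.mono (Set.inter_subset_right) hMm).baireMeasurableSet



lemma exists_denseOpen_seq {A : Set Cant} (hA : IsMeagre A) :
    ∃ D : ℕ → Set Cant, (∀ n, IsOpen (D n)) ∧ (∀ n, Dense (D n)) ∧ A ⊆ ⋃ n, (D n)ᶜ := by
  unfold IsMeagre at hA
  rcases mem_residual.1 hA with ⟨t, htA, htG, htd⟩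
  rcases htG with ⟨T, hTo, hTc, rfl⟩
  rcases Set.eq_empty_or_nonempty T with h0 | hTne
  · refine ⟨fun _ => Set.univ, fun _ => isOpen_univ, fun _ => dense_univ, ?_⟩
    intro χ hχ
    exfalso
    have : χ ∈ ⋂₀ T := by subst h0; simp
    exact (htA this) hχ
  · rcases Set.Countable.exists_eq_range hTc hTne with ⟨f, rfl⟩
    refine ⟨f, fun n => hTo _ ⟨n, rfl⟩, fun n => htd.mono ?_, ?_⟩
    · rw [Set.sInter_range]; exact Set.iInter_subset _ n
    · intro χ hχ
      by_contra hc
      simp only [Set.mem_iUnion, Set.mem_compl_iff, not_exists, not_not] at hc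
      have : χ ∈ ⋂₀ Set.range f := by
        rw [Set.sInter_range]; exact Set.mem_iInter.2 hc
      exact (htA this) hχ

/-- one stage of the Talagrand construction -/
lemma stage {V : Set Cant} (hVo : IsOpen V) (hVd : Dense V) (k : ℕ) :
    ∃ q : ℕ × (Cant → Cant), k < q.1 ∧
      ∀ χ : Cant, (∀ j < k, q.2 χ j = χ j) ∧
        ∀ ψ : Cant, (∀ j < q.1, ψ j = q.2 χ j) → ψ ∈ V := by
  classical
  have hpick : ∀ p : Fin k → Bool, ∃ ξ : Cant, (∀ j : Fin k, ξ j = p j) ∧ ∃ L : ℕ,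
      ∀ ψ : Cant, (∀ j < L, ψ j = ξ j) → ψ ∈ V := by
    intro p
    set χp : Cant := fun j => if h : j < k then p ⟨j, h⟩ else false with hχp
    have hne : (cyl (toList χp k) ∩ V).Nonempty := by
      apply hVd.inter_open_nonempty _ (isOpen_cyl _)
      exact ⟨χp, mem_cyl_toList χp k⟩
    rcases hne with ⟨ξ, hξc, hξV⟩
    rcases exists_cyl_subset hVo hξV with ⟨lb, hξlb, hlbV⟩
    refine ⟨ξ, ?_, lb.length, ?_⟩
    · intro j
      have h1 : ξ (j : ℕ) = (toList χp k).get ⟨j, by rw [toList_length]; exact j.2⟩ := by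
        have := mem_cyl.1 hξc ⟨(j : ℕ), by rw [toList_length]; exact j.2⟩
        simpa using this
      rw [h1, toList_get]
      simp [hχp, j.2]
    · intro ψ hψ
      apply hlbV
      apply mem_cyl_of_agree lb ψ ξ hξlb
      intro i hi
      exact hψ i hi
  choose ξf hξ1 hξ2 using hpick
  choose Lf hLf using hξ2
  refine ⟨((Finset.univ : Finset (Fin k → Bool)).sup Lf + k + 1,
    fun χ => ξf (fun j : Fin k => χ j)), by omega, ?_⟩
  intro χ
  constructor
  · intro j hj
    exact hξ1 _ ⟨j, hj⟩
  · intro ψ hψ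
    apply hLf (fun j : Fin k => χ j)
    intro j hj
    apply hψ
    have : Lf (fun j : Fin k => χ j) ≤ (Finset.univ : Finset (Fin k → Bool)).sup Lf :=
      Finset.le_sup (Finset.mem_univ _)
    omega


lemma dense_open_biInter {D : ℕ → Set Cant} (hDo : ∀ n, IsOpen (D n)) (hDd : ∀ n, Dense (D n))
    (m : ℕ) : IsOpen (⋂ j ∈ Finset.range m, D j) ∧ Dense (⋂ j ∈ Finset.range m, D j) := by
  constructor
  · exact isOpen_biInter_finset (fun j _ => hDo j)
  · induction m with
    | zero => simpa using dense_univ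
    | succ m ih =>
      rw [Finset.range_add_one, Finset.set_biInter_insert]
      exact Dense.inter_of_isOpen_left (hDd m) ih (hDo m)

section KW
variable (D : ℕ → Set Cant) (hDo : ∀ n, IsOpen (D n)) (hDd : ∀ n, Dense (D n))

/-- the interval construction data: `(KW n).1` is the n-th interval endpoint,
`(KW (n+1)).2` the pattern-extension function of stage n -/
def KW : ℕ → ℕ × (Cant → Cant) := fun n =>
  Nat.rec ((0, fun _ _ => false))
    (fun i p =>
      (stage (dense_open_biInter hDo hDd (i+1)).1 (dense_open_biInter hDo hDd (i+1)).2 p.1).choose) n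

lemma KW_spec (i : ℕ) :
    (KW D hDo hDd i).1 < (KW D hDo hDd (i+1)).1 ∧
    ∀ χ : Cant, (∀ j < (KW D hDo hDd i).1, (KW D hDo hDd (i+1)).2 χ j = χ j) ∧
      ∀ ψ : Cant, (∀ j < (KW D hDo hDd (i+1)).1, ψ j = (KW D hDo hDd (i+1)).2 χ j) →
        ψ ∈ ⋂ j ∈ Finset.range (i+1), D j := by
  have h := (stage (dense_open_biInter hDo hDd (i+1)).1 (dense_open_biInter hDo hDd (i+1)).2
    (KW D hDo hDd i).1).choose_spec
  exact ⟨h.1, h.2⟩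

lemma KW_strictMono : StrictMono (fun i => (KW D hDo hDd i).1) :=
  strictMono_nat_of_lt_succ (fun i => (KW_spec D hDo hDd i).1)

end KW

/-- the diagonal element: equals `X` off the skipped intervals, and follows the
stage patterns on the skipped intervals -/
def chi (X : Set ℕ) (K : ℕ → ℕ) (ii : ℕ → ℕ) (w : ℕ → Cant → Cant) (j : ℕ) : Bool :=
  open scoped Classical in
  if j ∈ X then true
  else if ht : ∃ t, K (ii t) ≤ j ∧ j < K (ii t + 1) then
    w (ii (Nat.find ht))
      (fun q => if hq : q < K (ii (Nat.find ht)) ∧ q < j then chi X K ii w q else false) j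
  else false
termination_by j
decreasing_by exact hq.2

lemma interval_unique {K ii : ℕ → ℕ} (hK : StrictMono K) (hii : StrictMono ii) {j t1 t2 : ℕ}
    (h1 : K (ii t1) ≤ j ∧ j < K (ii t1 + 1)) (h2 : K (ii t2) ≤ j ∧ j < K (ii t2 + 1)) :
    t1 = t2 := by
  by_contra hne
  rcases Nat.lt_or_ge t1 t2 with h | h
  · have : ii t1 + 1 ≤ ii t2 := hii h
    have : K (ii t1 + 1) ≤ K (ii t2) := hK.monotone this
    omega
  · have ht : t2 < t1 := by omega
    have : ii t2 + 1 ≤ ii t1 := hii ht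
    have : K (ii t2 + 1) ≤ K (ii t1) := hK.monotone this
    omega

theorem meagre_intervals (G : Set (Set ℕ)) (hup : ∀ X ∈ G, ∀ Y : Set ℕ, X ⊆ Y → Y ∈ G)
    (hm : IsMeagre (cantorCoded G)) :
    ∃ K : ℕ → ℕ, StrictMono K ∧
      ∀ X ∈ G, ∀ᶠ i in Filter.atTop, (X ∩ Set.Ico (K i) (K (i+1))).Nonempty := by
  classical
  rcases exists_denseOpen_seq hm with ⟨D, hDo, hDd, hsub⟩
  set K : ℕ → ℕ := fun i => (KW D hDo hDd i).1 with hKdef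
  set w : ℕ → Cant → Cant := fun m => (KW D hDo hDd (m+1)).2 with hwdef
  have hK : StrictMono K := KW_strictMono D hDo hDd
  refine ⟨K, hK, ?_⟩
  intro X hX
  by_contra hcon
  rw [Filter.not_eventually] at hcon
  have hfreq : ∀ a : ℕ, ∃ i, a ≤ i ∧ X ∩ Set.Ico (K i) (K (i+1)) = ∅ := by
    intro a
    rcases (Filter.frequently_atTop.1 hcon) a with ⟨i, hia, hie⟩
    exact ⟨i, hia, Set.not_nonempty_iff_eq_empty.1 hie⟩
  -- choose the skipped interval indices
  set ii : ℕ → ℕ := fun t => Nat.rec (Classical.choose (hfreq 0))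
    (fun _ prev => Classical.choose (hfreq (prev + 1))) t with hiidef
  have hii_miss : ∀ t, X ∩ Set.Ico (K (ii t)) (K (ii t + 1)) = ∅ := by
    intro t
    cases t with
    | zero => exact (Classical.choose_spec (hfreq 0)).2
    | succ t => exact (Classical.choose_spec (hfreq (ii t + 1))).2
  have hii_mono : StrictMono ii := by
    apply strictMono_nat_of_lt_succ
    intro t
    have := (Classical.choose_spec (hfreq (ii t + 1))).1
    show ii t < Classical.choose (hfreq (ii t + 1))
    omega
  have hii_ge : ∀ t, t ≤ ii t := fun t => hii_mono.le_apply
  -- the diagonal point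
  set c : Cant := chi X K ii w with hcdef
  -- X ⊆ its coded set
  have hXc : ∀ j ∈ X, c j = true := by
    intro j hj
    rw [hcdef, chi, if_pos hj]
  -- agreement with the stage pattern on each skipped interval
  have hagree : ∀ t, ∀ j < K (ii t + 1),
      c j = w (ii t) (fun q => if q < K (ii t) then c q else false) j := by
    intro t j hj
    rcases Nat.lt_or_ge j (K (ii t)) with hlow | hhigh
    · -- below the interval:  pattern agrees with its input there
      have hsp := ((KW_spec D hDo hDd (ii t)).2
        (fun q => if q < K (ii t) then c q else false)).1 j hlow
      rw [hwdef]
      simp only []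
      rw [hsp, if_pos hlow]
    · -- inside the skipped interval
      have hjX : j ∉ X := by
        intro hjX
        have : j ∈ X ∩ Set.Ico (K (ii t)) (K (ii t + 1)) := ⟨hjX, hhigh, hj⟩
        rw [hii_miss t] at this
        exact this
      have ht : ∃ t', K (ii t') ≤ j ∧ j < K (ii t' + 1) := ⟨t, hhigh, hj⟩
      have hfind : Nat.find ht = t :=
        interval_unique hK hii_mono (Nat.find_spec ht) ⟨hhigh, hj⟩
      rw [hcdef, chi, if_neg hjX, dif_pos ht, hfind]
      congr 1
      funext q
      by_cases hq : q < K (ii t)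
      · have hq2 : q < K (ii t) ∧ q < j := ⟨hq, by omega⟩
        rw [dif_pos hq2, if_pos hq]
      · rw [dif_neg (by omega), if_neg hq]
  -- hence the diagonal point is in every D s
  have hcD : ∀ s, c ∈ D s := by
    intro s
    have hmem := ((KW_spec D hDo hDd (ii s)).2
      (fun q => if q < K (ii s) then c q else false)).2 c (hagree s)
    have : c ∈ ⋂ j ∈ Finset.range (ii s + 1), D j := hmem
    simp only [Set.mem_iInter] at this
    exact this s (Finset.mem_range.2 (by have := hii_ge s; omega))
  -- so its coded set is not in G
  have hnotin : {n | c n = true} ∉ G := by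
    intro hin
    have : c ∈ cantorCoded G := hin
    have := hsub this
    rcases Set.mem_iUnion.1 this with ⟨n, hn⟩
    exact hn (hcD n)
  -- but it contains X, contradiction with upward closure
  exact hnotin (hup X hX _ (fun j hj => hXc j hj))



lemma idxK_ex (K : ℕ → ℕ) (hK : StrictMono K) (v : ℕ) : ∃ i, v < K i :=
  ⟨v+1, lt_of_lt_of_le (Nat.lt_succ_self v) hK.le_apply⟩

open scoped Classical in
/-- index of the first interval endpoint beyond v -/
def idxK (K : ℕ → ℕ) (hK : StrictMono K) (v : ℕ) : ℕ :=
  Nat.find (idxK_ex K hK v)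

open scoped Classical in
lemma idxK_spec1 (K : ℕ → ℕ) (hK : StrictMono K) (v : ℕ) : v < K (idxK K hK v) :=
  Nat.find_spec (idxK_ex K hK v)

/-- CORE: against the interval-pressure moves, a winning run of TWO misses
arbitrarily late intervals -/
lemma core {K m n : ℕ → ℕ} (hK : StrictMono K) (hn : StrictMono n)
    (hio : ∀ N, ∃ k, N ≤ k ∧ m k < n k)
    (hm : ∀ k, m (k+1) = K (idxK K hK (n k) + 1)) (B : ℕ) :
    ∃ i, B ≤ i ∧ Set.range n ∩ Set.Ico (K i) (K (i+1)) = ∅ := by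
  obtain ⟨k, hk1, hk2⟩ := hio (K B + 1)
  obtain ⟨k', rfl⟩ : ∃ k', k = k' + 1 := ⟨k - 1, by omega⟩
  set i := idxK K hK (n k') with hi
  have h1 : n k' < K i := idxK_spec1 K hK (n k')
  have h2 : K (i+1) < n (k'+1) := by
    have hthis := hk2
    rw [hm k'] at hthis
    rw [hi]
    exact hthis
  have hk'B : K B ≤ n k' := by
    have h3 : k' ≤ n k' := hn.le_apply
    omega
  have hiB : B < i := by
    have : K B < K i := by omega
    exact (hK.lt_iff_lt).1 this
  refine ⟨i, by omega, ?_⟩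
  ext x
  simp only [Set.mem_inter_iff, Set.mem_range, Set.mem_Ico, Set.mem_empty_iff_false,
    iff_false, not_and]
  rintro ⟨t, rfl⟩ hlo
  rcases Nat.lt_or_ge t (k'+1) with ht | ht
  · have : n t ≤ n k' := hn.monotone (by omega)
    omega
  · have : n (k'+1) ≤ n t := hn.monotone ht
    omega

/-- interval-hitting property implies ONE has a winning strategy -/
lemma intervals_oneWinning {F : Set (Set ℕ)} {K : ℕ → ℕ} (hK : StrictMono K)
    (h : ∀ X ∈ F, ∀ᶠ i in Filter.atTop, (X ∩ Set.Ico (K i) (K (i+1))).Nonempty) :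
    ∃ τ : Strat, OneWinning1 F τ := by
  refine ⟨fun l => K (idxK K hK (l.getLastD 0) + 1), ?_⟩
  rintro n ⟨hmono, hio, hrange⟩
  have hm : ∀ k, oneFollow (fun l => K (idxK K hK (l.getLastD 0) + 1)) n (k+1)
      = K (idxK K hK (n k) + 1) := by
    intro k
    unfold oneFollow
    congr 2
    rw [List.ofFn_succ']
    simp [List.concat_eq_append, List.getLastD_concat]
  rcases (h _ hrange).exists_forall_of_atTop with ⟨N, hN⟩
  rcases core hK hmono hio hm N with ⟨i, hiN, hie⟩
  rcases hN i hiN with ⟨x, hx⟩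
  rw [hie] at hx
  exact hx

/-- sup of strategy responses over short bounded histories -/
def supResp (τ : Strat) : ℕ → ℕ → List ℕ → ℕ
  | 0, _, p => τ p
  | (L+1), b, p => max (τ p) ((Finset.range b).sup (fun x => supResp τ L b (p ++ [x])))

lemma le_supResp (τ : Strat) (L b : ℕ) (p : List ℕ) : τ p ≤ supResp τ L b p := by
  cases L with
  | zero => simp [supResp]
  | succ L => simp [supResp]

lemma supResp_bound (τ : Strat) (b : ℕ) :
    ∀ (q : List ℕ) (L : ℕ) (p : List ℕ), (∀ x ∈ q, x < b) → q.length ≤ L →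
      τ (p ++ q) ≤ supResp τ L b p := by
  intro q
  induction q with
  | nil => intro L p _ _; simpa using le_supResp τ L b p
  | cons x q' ih =>
    intro L p hb hlen
    rcases L with _ | L'
    · simp at hlen
    · have h1 : τ (p ++ x :: q') = τ ((p ++ [x]) ++ q') := by simp
      rw [h1]
      have h2 : τ ((p ++ [x]) ++ q') ≤ supResp τ L' b (p ++ [x]) := by
        apply ih L' (p ++ [x]) (fun y hy => hb y (by simp [hy])) (by simp at hlen; omega)
      have h3 : supResp τ L' b (p ++ [x]) ≤ (Finset.range b).sup (fun y => supResp τ L' b (p ++ [y])) :=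
        Finset.le_sup (f := fun y => supResp τ L' b (p ++ [y]))
          (Finset.mem_range.2 (hb x (by simp)))
      calc τ ((p ++ [x]) ++ q') ≤ supResp τ L' b (p ++ [x]) := h2
        _ ≤ _ := h3
        _ ≤ supResp τ (L'+1) b p := by simp [supResp]

/-- closure sequence for a ONE strategy -/
def kk (τ : Strat) : ℕ → ℕ
  | 0 => 0
  | (i+1) => max (kk τ i + 1) (supResp τ (kk τ i) (kk τ i) [] + 1)

lemma kk_strictMono (τ : Strat) : StrictMono (kk τ) :=
  strictMono_nat_of_lt_succ (fun i => by simp [kk])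

lemma kk_bound (τ : Strat) (i : ℕ) (p : List ℕ) (hb : ∀ x ∈ p, x < kk τ i)
    (hlen : p.length ≤ kk τ i) : τ p < kk τ (i+1) := by
  have := supResp_bound τ (kk τ i) p (kk τ i) [] hb hlen
  simp at this
  have h2 : supResp τ (kk τ i) (kk τ i) [] + 1 ≤ kk τ (i+1) := by simp [kk]
  omega

/-- a winning strategy for ONE yields the interval-hitting property -/
lemma oneWinning_intervals {F : Set (Set ℕ)} (hinf : ∀ X ∈ F, X.Infinite)
    {τ : Strat} (hτ : OneWinning1 F τ) :
    ∃ K : ℕ → ℕ, StrictMono K ∧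
      ∀ X ∈ F, ∀ᶠ i in Filter.atTop, (X ∩ Set.Ico (K i) (K (i+1))).Nonempty := by
  classical
  refine ⟨fun i => kk τ (2*i), fun a b hab => (kk_strictMono τ) (by omega), ?_⟩
  intro X hX
  by_contra hcon
  rw [Filter.not_eventually] at hcon
  have hfreq : ∀ a : ℕ, ∃ i, a ≤ i ∧ X ∩ Set.Ico (kk τ (2*i)) (kk τ (2*(i+1))) = ∅ := by
    intro a
    rcases (Filter.frequently_atTop.1 hcon) a with ⟨i, hia, hie⟩
    exact ⟨i, hia, Set.not_nonempty_iff_eq_empty.1 hie⟩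
  have hXinf : X.Infinite := hinf X hX
  have hXinf' : {x | (fun y => y ∈ X) x}.Infinite := by simpa using hXinf
  set n : ℕ → ℕ := Nat.nth (· ∈ X) with hn
  have hmono : StrictMono n := Nat.nth_strictMono hXinf'
  have hrange : Set.range n ∈ F := by
    have : Set.range n = X := by
      rw [hn, Nat.range_nth_of_infinite hXinf']
      ext x; simp
    rw [this]; exact hX
  apply hτ n
  refine ⟨hmono, ?_, hrange⟩
  intro N
  -- find a missed double-interval far enough out
  obtain ⟨i, hia, hie⟩ := hfreq (n N + 1)
  set j : ℕ := Nat.count (· ∈ X) (kk τ (2*i)) with hj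
  have hkk2i : n N + 1 ≤ kk τ (2*i) := by
    have h1 : 2*i ≤ kk τ (2*i) := (kk_strictMono τ).le_apply
    omega
  have hjN : N < j := by
    have hnth : Nat.nth (fun x => x ∈ X) N < kk τ (2*i) := by
      rw [← hn]; omega
    rw [hj]
    exact (Nat.lt_nth_iff_count_lt hXinf').2 hnth
  refine ⟨j, by omega, ?_⟩
  -- the strategy's move at inning j is small
  have hmove : oneFollow τ n j < kk τ (2*i+1) := by
    unfold oneFollow
    apply kk_bound
    · intro x hx
      rcases List.mem_ofFn.1 hx with ⟨t, rfl⟩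
      exact Nat.nth_lt_of_lt_count (by rw [← hj]; exact t.2)
    · simp [hj, Nat.count_le]
  -- TWO's move is large
  have hlarge : kk τ (2*(i+1)) ≤ n j := by
    have h1 : kk τ (2*i) ≤ n j := by
      by_contra hlt
      push_neg at hlt
      have h4 := (Nat.lt_nth_iff_count_lt hXinf').2 hlt
      rw [← hj] at h4
      omega
    have h2 : n j ∈ X := Nat.nth_mem_of_infinite hXinf' j
    have h3 : n j ∉ Set.Ico (kk τ (2*i)) (kk τ (2*(i+1))) := by
      intro hmem
      have : n j ∈ X ∩ Set.Ico (kk τ (2*i)) (kk τ (2*(i+1))) := ⟨h2, hmem⟩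
      rw [hie] at this
      exact this
    simp only [Set.mem_Ico, not_and, not_lt] at h3
    exact h3 h1
  have : kk τ (2*i+1) < kk τ (2*(i+1)) := kk_strictMono τ (by omega)
  omega

/-- interval-hitting implies the coded filter is meagre -/
lemma intervals_meagre {F : Set (Set ℕ)} {K : ℕ → ℕ} (hK : StrictMono K)
    (h : ∀ X ∈ F, ∀ᶠ i in Filter.atTop, (X ∩ Set.Ico (K i) (K (i+1))).Nonempty) :
    IsMeagre (cantorCoded F) := by
  classical
  set C : ℕ → Set Cant := fun N =>
    {χ | ∀ i, N ≤ i → ∃ j, j ∈ Set.Ico (K i) (K (i+1)) ∧ χ j = true} with hC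
  have hsub : cantorCoded F ⊆ ⋃ N, C N := by
    intro χ hχ
    rcases (h _ hχ).exists_forall_of_atTop with ⟨N, hN⟩
    refine Set.mem_iUnion.2 ⟨N, ?_⟩
    intro i hi
    rcases hN i hi with ⟨x, hx1, hx2⟩
    exact ⟨x, hx2, hx1⟩
  have hmeag : ∀ N, IsMeagre (C N) := by
    intro N
    have hclosed : IsClosed (C N) := by
      have : C N = ⋂ i ∈ {i : ℕ | N ≤ i}, ⋃ j ∈ Set.Ico (K i) (K (i+1)), {χ : Cant | χ j = true} := by
        ext χ
        simp [hC]
      rw [this]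
      apply isClosed_biInter
      intro i _
      apply Set.Finite.isClosed_biUnion (Set.finite_Ico _ _)
      intro j _
      show IsClosed ((fun χ : Cant => χ j) ⁻¹' {true})
      exact IsClosed.preimage (continuous_apply j) (isClosed_discrete _)
    have hnwd : IsNowhereDense (C N) := by
      rw [hclosed.isNowhereDense_iff]
      rw [Set.eq_empty_iff_forall_notMem]
      intro χ hχ
      rcases exists_cyl_subset isOpen_interior hχ with ⟨l, hχl, hlsub⟩
      set i := max N l.length with hidef
      have hψ : ext0 l ∈ C N := interior_subset (hlsub (ext0_mem_cyl l))
      rcases hψ i (le_max_left _ _) with ⟨j, hj1, hj2⟩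
      have hlj : l.length ≤ j := by
        have h1 : i ≤ K i := hK.le_apply
        have h2 : l.length ≤ i := le_max_right _ _
        simp only [Set.mem_Ico] at hj1
        omega
      rw [ext0_false l j hlj] at hj2
      exact Bool.false_ne_true hj2
    rw [isMeagre_iff_countable_union_isNowhereDense]
    exact ⟨{C N}, by simpa using hnwd, Set.countable_singleton _, by simp⟩
  exact IsMeagre.mono hsub (isMeagre_iUnion hmeag)



/-- ONE's interval-pressure play against TWO's strategy σ -/
def mstar (σ : Strat) (K : ℕ → ℕ) (hK : StrictMono K) : ℕ → ℕ
  | 0 => K 1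
  | (k+1) => K (idxK K hK (σ (List.ofFn (fun i : Fin (k+1) => mstar σ K hK i))) + 1)
termination_by k => k
decreasing_by exact i.isLt

lemma mstar_succ (σ : Strat) (K : ℕ → ℕ) (hK : StrictMono K) (k : ℕ) :
    mstar σ K hK (k+1) = K (idxK K hK (twoFollow σ (mstar σ K hK) k) + 1) := by
  rw [mstar, twoFollow]

open scoped Classical

/-- characteristic function of the output of a play -/
def outChi (σ : Strat) (m : ℕ → ℕ) (v : ℕ) : Bool :=
  decide (∃ k, k ≤ v ∧ twoFollow σ m k = v)

lemma outChi_true_iff {σ : Strat} {m : ℕ → ℕ} (hmono : StrictMono (twoFollow σ m)) (v : ℕ) :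
    outChi σ m v = true ↔ v ∈ Set.range (twoFollow σ m) := by
  unfold outChi
  rw [decide_eq_true_iff]
  constructor
  · rintro ⟨k, _, hk⟩; exact ⟨k, hk⟩
  · rintro ⟨k, hk⟩
    exact ⟨k, by rw [← hk]; exact hmono.le_apply, hk⟩

lemma twoFollow_congr {σ : Strat} {m m' : ℕ → ℕ} {k : ℕ} (h : ∀ i ≤ k, m i = m' i) :
    twoFollow σ m k = twoFollow σ m' k := by
  unfold twoFollow
  have : (fun i : Fin (k+1) => m i) = (fun i : Fin (k+1) => m' i) :=
    funext fun i => h i (by omega)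
  rw [this]

lemma outChi_congr {σ : Strat} {m m' : ℕ → ℕ} {v : ℕ} (h : ∀ i ≤ v, m i = m' i) :
    outChi σ m v = outChi σ m' v := by
  unfold outChi
  rw [decide_eq_decide]
  constructor
  · rintro ⟨k, hk1, hk2⟩
    exact ⟨k, hk1, by rw [← twoFollow_congr (fun i hi => h i (le_trans hi hk1))]; exact hk2⟩
  · rintro ⟨k, hk1, hk2⟩
    exact ⟨k, hk1, by rw [twoFollow_congr (fun i hi => h i (le_trans hi hk1))]; exact hk2⟩

/-- the continuous map whose range codes the family generated by outputs of σ -/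
def Phat (σ : Strat) : (ℕ → ℕ) → Cant := fun u v =>
  (outChi σ (fun i => u (2*i)) v) || (decide (u (2*v+1) ≠ 0))

lemma cont_prefix_bool {g : (ℕ → ℕ) → Bool} (N : ℕ)
    (h : ∀ u u' : ℕ → ℕ, (∀ i < N, u i = u' i) → g u = g u') : Continuous g := by
  rw [continuous_iff_continuousAt]
  intro u
  have hUo : IsOpen {u' : ℕ → ℕ | ∀ i < N, u' i = u i} := by
    have : {u' : ℕ → ℕ | ∀ i < N, u' i = u i}
        = ⋂ i ∈ Finset.range N, (fun u' : ℕ → ℕ => u' i) ⁻¹' {u i} := by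
      ext u'; simp
    rw [this]
    exact isOpen_biInter_finset fun i _ =>
      (continuous_apply i).isOpen_preimage _ (isOpen_discrete _)
  unfold ContinuousAt
  apply Filter.Tendsto.congr' (f₁ := fun _ => g u)
  · filter_upwards [hUo.mem_nhds (by simp)] with u' hu'
    exact h u u' (fun i hi => (hu' i hi).symm)
  · exact tendsto_const_nhds

lemma cont_Phat (σ : Strat) : Continuous (Phat σ) := by
  apply continuous_pi
  intro v
  apply cont_prefix_bool (2*v+2)
  intro u u' hag
  unfold Phat
  have h1 : outChi σ (fun i => u (2*i)) v = outChi σ (fun i => u' (2*i)) v :=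
    outChi_congr (fun i hi => hag (2*i) (by omega))
  rw [h1, hag (2*v+1) (by omega)]

def Fgen (σ : Strat) : Set (Set ℕ) := {X | ∃ m : ℕ → ℕ, Set.range (twoFollow σ m) ⊆ X}

lemma Fgen_upward (σ : Strat) : ∀ X ∈ Fgen σ, ∀ Y : Set ℕ, X ⊆ Y → Y ∈ Fgen σ := by
  rintro X ⟨m, hm⟩ Y hXY
  exact ⟨m, hm.trans hXY⟩

lemma range_Phat (σ : Strat) (hs : ∀ m, StrictMono (twoFollow σ m)) :
    Set.range (Phat σ) = cantorCoded (Fgen σ) := by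
  ext χ
  constructor
  · rintro ⟨u, rfl⟩
    refine ⟨fun i => u (2*i), ?_⟩
    rintro v ⟨k, hk⟩
    show Phat σ u v = true
    unfold Phat
    rw [(outChi_true_iff (hs _) v).2 ⟨k, hk⟩]
    simp
  · intro hχ
    rcases hχ with ⟨m, hm⟩
    set u : ℕ → ℕ := fun i => if i % 2 = 0 then m (i/2)
        else (if χ ((i-1)/2) = true then 1 else 0) with hu
    have hueven : ∀ i, u (2*i) = m i := by
      intro i
      rw [hu]
      simp only [Nat.mul_mod_right, if_pos]
      congr 1
      omega
    have huodd : ∀ v, u (2*v+1) = (if χ v = true then 1 else 0) := by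
      intro v
      rw [hu]
      have h1 : (2*v+1) % 2 = 1 := by omega
      simp only [h1]
      norm_num
    refine ⟨u, ?_⟩
    funext v
    unfold Phat
    have he : outChi σ (fun i => u (2*i)) v = outChi σ m v :=
      outChi_congr (fun i _ => hueven i)
    rw [he, huodd v]
    by_cases hv : χ v = true
    · simp [hv]
    · have hout : outChi σ m v = false := by
        rw [Bool.eq_false_iff]
        intro htrue
        have := (outChi_true_iff (hs m) v).1 htrue
        exact hv (hm this)
      have hv' : χ v = false := Bool.eq_false_iff.2 hv
      simp [hout, hv']

/-- coordinate flip beyond N -/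
def flipMap (N : ℕ) : Cant → Cant := fun χ j => if j < N then χ j else !(χ j)

lemma flip_invol (N : ℕ) (χ : Cant) : flipMap N (flipMap N χ) = χ := by
  funext j
  unfold flipMap
  by_cases h : j < N <;> simp [h]

lemma cont_flip (N : ℕ) : Continuous (flipMap N) := by
  apply continuous_pi
  intro j
  unfold flipMap
  by_cases h : j < N
  · simp only [h, if_true]
    exact continuous_apply j
  · simp only [h, if_false]
    exact Continuous.comp (g := fun b : Bool => !b) continuous_of_discreteTopology
      (continuous_apply j)

def flipHomeo (N : ℕ) : Cant ≃ₜ Cant :=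
  ⟨⟨flipMap N, flipMap N, fun χ => flip_invol N χ, fun χ => flip_invol N χ⟩,
    cont_flip N, cont_flip N⟩

lemma flip_preimage_cyl (l : List Bool) :
    (flipMap l.length) ⁻¹' (cyl l) = cyl l := by
  ext χ
  rw [Set.mem_preimage, mem_cyl, mem_cyl]
  constructor
  · intro h i
    have := h i
    unfold flipMap at this
    rwa [if_pos i.isLt] at this
  · intro h i
    show flipMap l.length χ i = l.get i
    unfold flipMap
    rw [if_pos i.isLt]
    exact h i

/-- MAIN: TWO never has a winning strategy in G1 over a non-principal filter -/
theorem twoNever (F : Set (Set ℕ)) (hF : IsNPFilter F) (σ : Strat)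
    (hσ : TwoWinning1 F σ) : False := by
  classical
  have hs : ∀ m, StrictMono (twoFollow σ m) := fun m => (hσ m).1
  by_cases hmg : IsMeagre (cantorCoded (Fgen σ))
  · -- meagre case: intervals + pressure play contradiction
    rcases meagre_intervals (Fgen σ) (Fgen_upward σ) hmg with ⟨K, hK, hhits⟩
    set m := mstar σ K hK with hmdef
    set n := twoFollow σ m with hndef
    have hXF : Set.range n ∈ Fgen σ := ⟨m, le_refl _⟩
    rcases (hhits _ hXF).exists_forall_of_atTop with ⟨N, hN⟩
    rcases core hK (hσ m).1 (hσ m).2.1 (fun k => mstar_succ σ K hK k) N with ⟨i, hiN, hie⟩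
    rcases hN i hiN with ⟨x, hx⟩
    rw [hie] at hx
    exact hx
  · -- nonmeagre case: flip argument
    have hbm : BaireMeasurableSet (cantorCoded (Fgen σ)) := by
      rw [← range_Phat σ hs]
      exact baireMeasurableSet_range _ (cont_Phat σ)
    rcases comeagre_cyl_of_nonmeagre hbm hmg with ⟨l, hl⟩
    set N := l.length with hNdef
    set S := cantorCoded (Fgen σ) with hSdef
    have hl2 : IsMeagre (cyl l \ (flipMap N) ⁻¹' S) := by
      have heq : cyl l \ (flipMap N) ⁻¹' S = (flipMap N) ⁻¹' (cyl l \ S) := by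
        rw [Set.preimage_diff, flip_preimage_cyl]
      rw [heq]
      exact IsMeagre.preimage_of_isOpenMap (cont_flip N) (flipHomeo N).isOpenMap hl
    have hcup : cyl l \ (S ∩ (flipMap N) ⁻¹' S) ⊆ (cyl l \ S) ∪ (cyl l \ (flipMap N) ⁻¹' S) := by
      intro χ ⟨h1, h2⟩
      rcases Classical.em (χ ∈ S) with h | h
      · exact Or.inr ⟨h1, fun hmem => h2 ⟨h, hmem⟩⟩
      · exact Or.inl ⟨h1, h⟩
    have hmeag : IsMeagre (cyl l \ (S ∩ (flipMap N) ⁻¹' S)) := by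
      apply IsMeagre.mono hcup
      unfold IsMeagre at *
      rw [Set.compl_union]
      exact Filter.inter_mem hl hl2
    have hne : (cyl l ∩ (S ∩ (flipMap N) ⁻¹' S)).Nonempty := by
      rw [Set.nonempty_iff_ne_empty]
      intro hc
      apply not_isMeagre_cyl l
      refine IsMeagre.mono ?_ hmeag
      intro χ hχ
      constructor
      · exact hχ
      · intro hmem
        have h2 : χ ∈ cyl l ∩ (S ∩ (flipMap N) ⁻¹' S) := ⟨hχ, hmem⟩
        rw [hc] at h2
        exact h2
    rcases hne with ⟨χ, hχl, hχS, hχS'⟩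
    rcases hχS with ⟨m1, hm1⟩
    rcases hχS' with ⟨m2, hm2⟩
    -- the two outputs intersect in a finite set
    have hfin : Set.range (twoFollow σ m1) ∩ Set.range (twoFollow σ m2) ⊆ Set.Iio N := by
      intro v ⟨hv1, hv2⟩
      by_contra hvN
      simp only [Set.mem_Iio, not_lt] at hvN
      have h1 : χ v = true := hm1 hv1
      have h2 : flipMap N χ v = true := hm2 hv2
      unfold flipMap at h2
      rw [if_neg (by omega)] at h2
      rw [h1] at h2
      simp at h2
    have hint : Set.range (twoFollow σ m1) ∩ Set.range (twoFollow σ m2) ∈ F :=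
      hF.2.1 _ (hσ m1).2.2 _ (hσ m2).2.2
    have hinf := hF.2.2 _ hint
    exact hinf (Set.Finite.subset (Set.finite_Iio N) hfin)

end S3
end

/-- `F` meager ↔ ONE has a winning strategy in `G1(F)` ↔ `G1(F)` is determined. -/
theorem stmt3 (F : Set (Set ℕ)) (hF : IsNPFilter F) :
    List.TFAE [IsMeagre (cantorCoded F),
               ∃ σ : Strat, OneWinning1 F σ,
               (∃ σ : Strat, OneWinning1 F σ) ∨ (∃ σ : Strat, TwoWinning1 F σ)] := by
  tfae_have 1 → 2 := by
    intro h1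
    obtain ⟨K, hK, hhits⟩ := S3.meagre_intervals F hF.1 h1
    exact S3.intervals_oneWinning hK hhits
  tfae_have 2 → 3 := fun h => Or.inl h
  tfae_have 3 → 1 := by
    rintro (⟨τ, hτ⟩ | ⟨σ, hσ⟩)
    · obtain ⟨K, hK, hhits⟩ := S3.oneWinning_intervals hF.2.2 hτ
      exact S3.intervals_meagre hK hhits
    · exact absurd hσ (fun h => S3.twoNever F hF σ h)
  tfae_finish
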